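/- With Y_ext = [Y; σ(Y); ...; σ^{u-1}(Y)], the rank of Y_ext over F_{q^N} is at most the column rank of Y over F_q. -/

import Mathlib

/-- the rank of `Y_ext = [Y; σ(Y); …; σ^{u−1}(Y)]` over `F_{q^N}` is at most
the column rank of `Y` over `F_q`. -/
theorem rank_ext_le_colRank (K L : Type*) [Field K] [Fintype K] [Field L] [Fintype L]
    [Algebra K L] (m t u : ℕ) (Y : Matrix (Fin m) (Fin t) L) :
    (Matrix.of fun (p : Fin u × Fin m) (j : Fin t) =>
        Y p.2 j ^ (Fintype.card K) ^ (p.1 : ℕ)).rank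
      ≤ Module.finrank K (Submodule.span K (Set.range Y.transpose)) := by
  classical
  obtain ⟨n, hp, hq⟩ := FiniteField.card K (ringChar K)
  haveI : Fact (Nat.Prime (ringChar K)) := ⟨hp⟩
  haveI : CharP L (ringChar K) :=
    charP_of_injective_algebraMap (algebraMap K L).injective _
  set V := Submodule.span K (Set.range Y.transpose) with hV
  set d := Module.finrank K V with hd
  let b : Module.Basis (Fin d) K V := Module.finBasis K V
  let w : Fin d → (Fin u × Fin m → L) := fun k p =>
    ((b k : Fin m → L) p.2) ^ (Fintype.card K) ^ (p.1 : ℕ)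
  have hpowq : ∀ (i : ℕ) (x : L),
      x ^ (Fintype.card K) ^ i = iterateFrobenius L (ringChar K) (n * i) x := by
    intro i x
    rw [iterateFrobenius_def, hq, ← pow_mul]
  set A : Matrix (Fin u × Fin m) (Fin t) L := Matrix.of fun (p : Fin u × Fin m) (j : Fin t) =>
        Y p.2 j ^ (Fintype.card K) ^ (p.1 : ℕ) with hA
  have key : ∀ j : Fin t, A.transpose j ∈ Submodule.span L (Set.range w) := by
    intro j
    have hmem : Y.transpose j ∈ V := Submodule.subset_span (Set.mem_range_self j)
    set v : V := ⟨Y.transpose j, hmem⟩ with hv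
    have hrepr := b.sum_repr v
    have hfun : ∀ i : Fin m,
        Y i j = ∑ k, algebraMap K L (b.repr v k) * (b k : Fin m → L) i := by
      intro i
      have h1 := congrFun (congrArg (Subtype.val) hrepr.symm) i
      have h2 : ((∑ k, b.repr v k • b k : V) : Fin m → L) i
          = ∑ k, algebraMap K L (b.repr v k) * (b k : Fin m → L) i := by
        rw [AddSubmonoidClass.coe_finset_sum]
        rw [Finset.sum_apply]
        refine Finset.sum_congr rfl fun k _ => ?_
        rw [Submodule.coe_smul, Pi.smul_apply, Algebra.smul_def]
      calc Y i j = (v : Fin m → L) i := rfl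
        _ = ∑ k, algebraMap K L (b.repr v k) * (b k : Fin m → L) i := by
            rw [h1]; exact h2
    have hcol : A.transpose j = ∑ k, algebraMap K L (b.repr v k) • w k := by
      funext p
      have : A.transpose j p = Y p.2 j ^ (Fintype.card K) ^ (p.1 : ℕ) := rfl
      rw [this, hfun p.2, hpowq, map_sum]
      rw [Finset.sum_apply]
      refine Finset.sum_congr rfl fun k _ => ?_
      rw [map_mul, Pi.smul_apply, smul_eq_mul]
      congr 1
      · rw [← hpowq, ← map_pow, FiniteField.pow_card_pow]
      · show iterateFrobenius L (ringChar K) (n * (p.1 : ℕ)) ((b k : Fin m → L) p.2) = w k p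
        rw [← hpowq]
    rw [hcol]
    exact Submodule.sum_mem _ fun k _ =>
      Submodule.smul_mem _ _ (Submodule.subset_span (Set.mem_range_self k))
  rw [Matrix.rank_eq_finrank_span_cols]
  have hle : Submodule.span L (Set.range A.transpose) ≤ Submodule.span L (Set.range w) :=
    Submodule.span_le.2 (by rintro _ ⟨j, rfl⟩; exact key j)
  calc Module.finrank L (Submodule.span L (Set.range A.transpose))
      ≤ Module.finrank L (Submodule.span L (Set.range w)) := Submodule.finrank_mono hle
    _ ≤ Fintype.card (Fin d) := finrank_range_le_card w
    _ = d := Fintype.card_fin d
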